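/- Let T be a triangulated category satisfying the octahedral axiom, P a connective class of objects closed under isomorphisms and finite direct sums containing 0, and I ⊆ P a subclass closed under isomorphisms and finite direct sums containing 0. Fix d ≥ 1. Set A^{(d)} := (P ∗ ΣP ∗ ⋯ ∗ Σ^d P) ∩ { X : Hom_T(X, Σ^m I') = 0 for all I' ∈ I, m ≥ 1 }, for 0 ≤ i ≤ d set B^{(i)} := (I ∗ ΣI ∗ ⋯ ∗ Σ^{i-1}I ∗ Σ^i P) ∩ { X : Hom_T(X, Σ^m I') = 0 for all I' ∈ I, m ≥ 1 } (with B^{(0)} := P ∩ the same kernel class), and let C^{(d)} be the union of the B^{(i)} for 0 ≤ i ≤ d. Then I is covariantly finite in A^{(d)} if and only if I is covariantly finite in C^{(d)}. -/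

import Mathlib

open CategoryTheory Limits Pretriangulated ZeroObject

universe v u

set_option linter.unusedSectionVars false
set_option maxHeartbeats 1000000

namespace AuslanderIyamaStmt5

variable {C : Type u} [Category.{v} C] [HasZeroObject C] [HasShift C ℤ] [Preadditive C]
  [∀ n : ℤ, (shiftFunctor C n).Additive] [Pretriangulated C] [HasBinaryBiproducts C]

/-- `S₁ ∗ S₂`: objects `Y` fitting in a distinguished triangle `X ⟶ Y ⟶ Z ⟶ X⟦1⟧`
with `X ∈ S₁` and `Z ∈ S₂`. -/
def star (S₁ S₂ : Set C) : Set C :=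
  {Y | ∃ (X Z : C) (f : X ⟶ Y) (g : Y ⟶ Z) (h : Z ⟶ X⟦(1 : ℤ)⟧),
    (Triangle.mk f g h ∈ distTriang C) ∧ X ∈ S₁ ∧ Z ∈ S₂}

/-- `Σⁿ S`, closed under isomorphism. -/
def shiftSet (n : ℤ) (S : Set C) : Set C :=
  {X | ∃ Y ∈ S, Nonempty (X ≅ Y⟦n⟧)}

/-- `V n = P ∗ ΣP ∗ ⋯ ∗ Σⁿ P` (associated to the left; by the octahedral axiom `∗` is
associative so the grouping is irrelevant). -/
def V (P : Set C) : ℕ → Set C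
  | 0 => P
  | n + 1 => star (V P n) (shiftSet ((n : ℤ) + 1) P)

/-- The kernel class `{X : Hom(X, Σ^m I') = 0 for all I' ∈ I, m ≥ 1}`. -/
def extKer (I : Set C) : Set C :=
  {X | ∀ I' ∈ I, ∀ m : ℤ, 1 ≤ m → ∀ f : X ⟶ I'⟦m⟧, f = 0}

/-- `B I P 0 = P` and `B I P i = I ∗ ΣI ∗ ⋯ ∗ Σ^{i-1}I ∗ Σ^i P` for `i ≥ 1`. -/
def B (I P : Set C) : ℕ → Set C
  | 0 => P
  | i + 1 => star (V I i) (shiftSet ((i : ℤ) + 1) P)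

/-- `I` is covariantly finite in `S`: every `X ∈ S` admits a left `I`-approximation. -/
def CovFin (I S : Set C) : Prop :=
  ∀ X ∈ S, ∃ I₀ ∈ I, ∃ f : X ⟶ I₀, ∀ I' ∈ I, ∀ g : X ⟶ I', ∃ h : I₀ ⟶ I', f ≫ h = g

/-! ### Shift vanishing helpers -/

lemma hom_from_shift_neg_one_zero {Q W : C}
    (hQ : ∀ f : Q ⟶ W⟦(1:ℤ)⟧, f = 0) (f : Q⟦(-1:ℤ)⟧ ⟶ W) : f = 0 := by
  have e : W ≅ (W⟦(1:ℤ)⟧)⟦(-1:ℤ)⟧ := ((shiftFunctorCompIsoId C (1:ℤ) (-1:ℤ) (by ring)).app W).symm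
  have h0 : (shiftFunctor C (-1:ℤ)).preimage (f ≫ e.hom) = 0 := hQ _
  have hz : f ≫ e.hom = 0 := by
    rw [← (shiftFunctor C (-1:ℤ)).map_preimage (f ≫ e.hom), h0, Functor.map_zero]
  rw [← Category.comp_id f, ← e.hom_inv_id, ← Category.assoc, hz, Limits.zero_comp]

lemma hom_shift_one_zero {A W : C} (h0 : ∀ m : ℤ, 1 ≤ m → ∀ f : A ⟶ W⟦m⟧, f = 0)
    (m : ℤ) (hm : 1 ≤ m) (f : A⟦(1:ℤ)⟧ ⟶ W⟦m + 1⟧) : f = 0 := by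
  have e : W⟦m+1⟧ ≅ (W⟦m⟧)⟦(1:ℤ)⟧ := (shiftFunctorAdd' C m 1 (m+1) rfl).app W
  have h1 : (shiftFunctor C (1:ℤ)).preimage (f ≫ e.hom) = 0 := h0 m hm _
  have hz : f ≫ e.hom = 0 := by
    rw [← (shiftFunctor C (1:ℤ)).map_preimage (f ≫ e.hom), h1, Functor.map_zero]
  rw [← Category.comp_id f, ← e.hom_inv_id, ← Category.assoc, hz, Limits.zero_comp]

/-! ### Distinguished triangle transport helpers -/

lemma distIso₁ {A A' M Z : C} {f : A ⟶ M} {g : M ⟶ Z} {h : Z ⟶ A⟦(1:ℤ)⟧}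
    (hT : Triangle.mk f g h ∈ distTriang C) (e : A ≅ A') :
    Triangle.mk (e.inv ≫ f) g (h ≫ e.hom⟦(1:ℤ)⟧') ∈ distTriang C := by
  refine isomorphic_distinguished _ hT _ ?_
  refine Triangle.isoMk _ _ e.symm (Iso.refl _) (Iso.refl _) ?_ ?_ ?_
  · simp [Triangle.mk]
  · simp [Triangle.mk]
  · dsimp [Triangle.mk]
    simp only [Category.comp_id, Category.assoc, ← Functor.map_comp, Iso.hom_inv_id,
      Functor.map_id]
    simp

lemma distIso₂ {A M M' Z : C} {f : A ⟶ M} {g : M ⟶ Z} {h : Z ⟶ A⟦(1:ℤ)⟧}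
    (hT : Triangle.mk f g h ∈ distTriang C) (e : M ≅ M') :
    Triangle.mk (f ≫ e.hom) (e.inv ≫ g) h ∈ distTriang C := by
  refine isomorphic_distinguished _ hT _ ?_
  refine Triangle.isoMk _ _ (Iso.refl _) e.symm (Iso.refl _) ?_ ?_ ?_ <;> simp [Triangle.mk]

lemma distIso₃ {A M Z Z' : C} {f : A ⟶ M} {g : M ⟶ Z} {h : Z ⟶ A⟦(1:ℤ)⟧}
    (hT : Triangle.mk f g h ∈ distTriang C) (e : Z ≅ Z') :
    Triangle.mk f (g ≫ e.hom) (e.inv ≫ h) ∈ distTriang C := by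
  refine isomorphic_distinguished _ hT _ ?_
  refine Triangle.isoMk _ _ (Iso.refl _) (Iso.refl _) e.symm ?_ ?_ ?_ <;> simp [Triangle.mk]

/-- Given a distinguished triangle `A ⟶ M ⟶ Z ⟶ A⟦1⟧` and an iso `Z ≅ S⟦1⟧`,
there is a distinguished triangle `S ⟶ A ⟶ M ⟶ S⟦1⟧`. -/
lemma fiberForm {A M Z S : C} {f : A ⟶ M} {g : M ⟶ Z} {h : Z ⟶ A⟦(1:ℤ)⟧}
    (hT : Triangle.mk f g h ∈ distTriang C) (ζ : Z ≅ S⟦(1:ℤ)⟧) :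
    ∃ (δ : S ⟶ A) (g' : M ⟶ S⟦(1:ℤ)⟧), Triangle.mk δ f g' ∈ distTriang C := by
  have h2 := distIso₃ hT ζ
  have h3 := inv_rot_of_distTriang _ h2
  have h4 := distIso₁ h3 ((shiftFunctorCompIsoId C (1:ℤ) (-1:ℤ) (by ring)).app S)
  exact ⟨_, _, h4⟩

/-- A distinguished triangle with zero connecting map splits. -/
lemma splitIso {A Y Z : C} {a : A ⟶ Y} {b : Y ⟶ Z}
    (hT : Triangle.mk a b (0 : Z ⟶ A⟦(1:ℤ)⟧) ∈ distTriang C) :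
    ∃ e : Y ≅ A ⊞ Z, a ≫ e.hom = biprod.inl ∧ b = e.hom ≫ biprod.snd := by
  obtain ⟨e, h₁, h₂⟩ := exists_iso_binaryBiproduct_of_distTriang _ hT rfl
  exact ⟨e, h₁, h₂⟩

/-- A distinguished triangle with zero middle map splits its first object. -/
lemma splitIso_of_mor₂_zero {X₁ X₂ X₃ : C} {a : X₁ ⟶ X₂} {c : X₃ ⟶ X₁⟦(1:ℤ)⟧}
    (hT : Triangle.mk a (0 : X₂ ⟶ X₃) c ∈ distTriang C) :
    ∃ _e : X₁ ≅ (X₃⟦(-1:ℤ)⟧) ⊞ X₂, True := by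
  have h3 : (Triangle.mk a (0 : X₂ ⟶ X₃) c).invRotate.mor₃ = 0 := by
    simp [Triangle.invRotate, Triangle.mk]; exact Limits.zero_comp
  have h5 : Triangle.mk ((Triangle.mk a (0 : X₂ ⟶ X₃) c).invRotate.mor₁) a
      (0 : X₂ ⟶ (X₃⟦(-1:ℤ)⟧)⟦(1:ℤ)⟧) ∈ distTriang C := by
    exact h3 ▸ inv_rot_of_distTriang _ hT
  obtain ⟨e, -, -⟩ := splitIso h5
  exact ⟨e, trivial⟩

/-- Adding `W ⊞ -` to a distinguished triangle (cone of `biprod.map (𝟙 W) f`). -/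
lemma biprodMapTriangle (W : C) {N Y Q : C} {f : N ⟶ Y} {p : Y ⟶ Q} {q : Q ⟶ N⟦(1:ℤ)⟧}
    (hT : Triangle.mk f p q ∈ distTriang C) :
    ∃ (p' : W ⊞ Y ⟶ Q) (q' : Q ⟶ (W ⊞ N)⟦(1:ℤ)⟧),
      Triangle.mk (biprod.map (𝟙 W) f) p' q' ∈ distTriang C := by
  obtain ⟨Z, g', h', hT'⟩ := distinguished_cocone_triangle (biprod.map (𝟙 W) f)
  -- morphisms between the cones
  let φ₂ := completeDistinguishedTriangleMorphism (Triangle.mk f p q) (Triangle.mk (biprod.map (𝟙 W) f) g' h')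
    hT hT' biprod.inr biprod.inr (by simp [Triangle.mk])
  let ψ := completeDistinguishedTriangleMorphism (Triangle.mk (biprod.map (𝟙 W) f) g' h') (Triangle.mk f p q)
    hT' hT biprod.snd biprod.snd (by simp [Triangle.mk])
  let φ₁ := completeDistinguishedTriangleMorphism (contractibleTriangle W) (Triangle.mk (biprod.map (𝟙 W) f) g' h')
    (contractible_distinguished W) hT' biprod.inl biprod.inl (by simp [contractibleTriangle, Triangle.mk])
  let χ := completeDistinguishedTriangleMorphism (Triangle.mk (biprod.map (𝟙 W) f) g' h') (contractibleTriangle W)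
    hT' (contractible_distinguished W) biprod.fst biprod.fst (by simp [contractibleTriangle, Triangle.mk])
  have hinlg' : biprod.inl ≫ g' = 0 := by
    have := φ₁.comm₂
    simp [contractibleTriangle, φ₁, Triangle.mk] at this
    exact this.symm
  have hfsth' : h' ≫ (biprod.fst : W ⊞ N ⟶ W)⟦(1:ℤ)⟧' = 0 := by
    have := χ.comm₃
    simpa [contractibleTriangle, χ, Triangle.mk, completeDistinguishedTriangleMorphism] using this
  have hc : IsIso (φ₂.hom₃ ≫ ψ.hom₃) := by
    have := isIso₃_of_isIso₁₂ (φ₂ ≫ ψ) hT hT ?_ ?_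
    · simpa using this
    · have : (φ₂ ≫ ψ).hom₁ = biprod.inr ≫ biprod.snd := rfl
      rw [this, biprod.inr_snd]; infer_instance
    · have : (φ₂ ≫ ψ).hom₂ = biprod.inr ≫ biprod.snd := rfl
      rw [this, biprod.inr_snd]; infer_instance
  have hcc : IsIso (ψ.hom₃ ≫ φ₂.hom₃) := by
    -- build the endomorphism of the cone triangle with components 𝟙, 𝟙, ψ₃ ≫ c
    have comm₂ : g' ≫ (ψ.hom₃ ≫ φ₂.hom₃) = 𝟙 _ ≫ g' := by
      have e₁ : g' ≫ ψ.hom₃ = biprod.snd ≫ p := ψ.comm₂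
      have e₂ : p ≫ φ₂.hom₃ = biprod.inr ≫ g' := φ₂.comm₂
      erw [← Category.assoc, e₁, Category.assoc, e₂, Category.id_comp, ← Category.assoc]
      conv_rhs => rw [← Category.id_comp g', ← biprod.total]
      rw [Preadditive.add_comp, Category.assoc, Category.assoc, hinlg', Limits.comp_zero, zero_add]; exact Category.assoc _ _ _
    have comm₃ : h' ≫ (𝟙 (W ⊞ N))⟦(1:ℤ)⟧' = (ψ.hom₃ ≫ φ₂.hom₃) ≫ h' := by
      have e₁ : h' ≫ (biprod.snd : W ⊞ N ⟶ N)⟦(1:ℤ)⟧' = ψ.hom₃ ≫ q := by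
        have := ψ.comm₃; simpa [ψ, Triangle.mk, completeDistinguishedTriangleMorphism] using this
      have e₂ : q ≫ (biprod.inr : N ⟶ W ⊞ N)⟦(1:ℤ)⟧' = φ₂.hom₃ ≫ h' := by
        have := φ₂.comm₃; simpa [φ₂, Triangle.mk, completeDistinguishedTriangleMorphism] using this
      erw [Category.assoc, ← e₂, ← Category.assoc, ← e₁, Category.assoc, ← Functor.map_comp]
      conv_lhs => rw [show (𝟙 (W ⊞ N)) = biprod.fst ≫ biprod.inl + biprod.snd ≫ biprod.inr from
        (biprod.total).symm]
      rw [Functor.map_add, Preadditive.comp_add, Functor.map_comp, ← Category.assoc, hfsth',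
        Limits.zero_comp, zero_add]; rfl
    let σ : Triangle.mk (biprod.map (𝟙 W) f) g' h' ⟶ Triangle.mk (biprod.map (𝟙 W) f) g' h' :=
      { hom₁ := 𝟙 _
        hom₂ := 𝟙 _
        hom₃ := ψ.hom₃ ≫ φ₂.hom₃
        comm₁ := by simp [Triangle.mk]
        comm₂ := by simpa [Triangle.mk] using comm₂
        comm₃ := by simpa [Triangle.mk] using comm₃ }
    have := isIso₃_of_isIso₁₂ σ hT' hT' (by dsimp [σ]; infer_instance) (by dsimp [σ]; infer_instance)
    simpa [σ] using this
  -- hence φ₂.hom₃ : Q ⟶ Z is an isomorphism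
  have hiso : IsIso φ₂.hom₃ := by
    obtain ⟨r, hr⟩ := (⟨inv (φ₂.hom₃ ≫ ψ.hom₃), by simp⟩ : ∃ r, (φ₂.hom₃ ≫ ψ.hom₃) ≫ r = 𝟙 _)
    obtain ⟨s, hs⟩ := (⟨inv (ψ.hom₃ ≫ φ₂.hom₃), by simp⟩ : ∃ s, s ≫ (ψ.hom₃ ≫ φ₂.hom₃) = 𝟙 _)
    refine ⟨⟨ψ.hom₃ ≫ r, ?_, ?_⟩⟩
    · rw [← Category.assoc]; exact hr
    · have h1 : φ₂.hom₃ ≫ (ψ.hom₃ ≫ r) ≫ φ₂.hom₃ = φ₂.hom₃ := by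
        rw [← Category.assoc, ← Category.assoc, hr, Category.id_comp]
      calc (ψ.hom₃ ≫ r) ≫ φ₂.hom₃ = (s ≫ (ψ.hom₃ ≫ φ₂.hom₃)) ≫ ((ψ.hom₃ ≫ r) ≫ φ₂.hom₃) := by
              rw [hs, Category.id_comp]
        _ = s ≫ ψ.hom₃ ≫ (φ₂.hom₃ ≫ (ψ.hom₃ ≫ r) ≫ φ₂.hom₃) := by
              simp only [Category.assoc]
        _ = s ≫ (ψ.hom₃ ≫ φ₂.hom₃) := by rw [h1]
        _ = 𝟙 _ := hs
  exact ⟨g' ≫ (asIso φ₂.hom₃).inv, (asIso φ₂.hom₃).hom ≫ h',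
    distIso₃ hT' (asIso φ₂.hom₃).symm⟩

/-! ### Class lemmas -/

lemma star_mono {S₁ S₂ S₁' S₂' : Set C} (h₁ : S₁ ⊆ S₁') (h₂ : S₂ ⊆ S₂') :
    star S₁ S₂ ⊆ star S₁' S₂' := by
  rintro Y ⟨X, Z, f, g, h, hT, hX, hZ⟩
  exact ⟨X, Z, f, g, h, hT, h₁ hX, h₂ hZ⟩

lemma shiftSet_mono {S S' : Set C} (h : S ⊆ S') (n : ℤ) : shiftSet n S ⊆ shiftSet n S' := by
  rintro X ⟨Y, hY, ⟨e⟩⟩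
  exact ⟨Y, h hY, ⟨e⟩⟩

lemma mem_shiftSet_self {S : Set C} {X : C} (h : X ∈ S) (n : ℤ) : X⟦n⟧ ∈ shiftSet n S :=
  ⟨X, h, ⟨Iso.refl _⟩⟩

lemma shiftSet_shiftSet (a b : ℤ) (S : Set C) :
    shiftSet a (shiftSet b S) = shiftSet (b + a) S := by
  ext X
  constructor
  · rintro ⟨Y, ⟨Z, hZ, ⟨e₂⟩⟩, ⟨e₁⟩⟩
    exact ⟨Z, hZ, ⟨e₁ ≪≫ (shiftFunctor C a).mapIso e₂ ≪≫
      ((shiftFunctorAdd' C b a (b+a) rfl).app Z).symm⟩⟩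
  · rintro ⟨Z, hZ, ⟨e⟩⟩
    exact ⟨Z⟦b⟧, mem_shiftSet_self hZ b, ⟨e ≪≫ (shiftFunctorAdd' C b a (b+a) rfl).app Z⟩⟩

lemma star_shiftSet (n : ℤ) (S₁ S₂ : Set C) :
    shiftSet n (star S₁ S₂) = star (shiftSet n S₁) (shiftSet n S₂) := by
  ext X
  constructor
  · rintro ⟨Y, ⟨A, Z, f, g, h, hT, hA, hZ⟩, ⟨e⟩⟩
    have h1 := Triangle.shift_distinguished _ hT n
    have h2 := distIso₂ h1 e.symm
    exact ⟨A⟦n⟧, Z⟦n⟧, _, _, _, h2, mem_shiftSet_self hA n, mem_shiftSet_self hZ n⟩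
  · rintro ⟨A', Z', f, g, h, hT, ⟨A, hA, ⟨eA⟩⟩, ⟨Z, hZ, ⟨eZ⟩⟩⟩
    have h1 := distIso₁ hT eA
    have h2 := distIso₃ h1 eZ
    have h3 := Triangle.shift_distinguished _ h2 (-n)
    have h4 := distIso₁ h3 ((shiftFunctorCompIsoId C n (-n) (by ring)).app A)
    have h5 := distIso₃ h4 ((shiftFunctorCompIsoId C n (-n) (by ring)).app Z)
    refine ⟨X⟦-n⟧, ⟨A, Z, _, _, _, h5, hA, hZ⟩,
      ⟨((shiftFunctorCompIsoId C (-n) n (by ring)).app X).symm⟩⟩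

lemma star_assoc [IsTriangulated C] (S₁ S₂ S₃ : Set C) :
    star (star S₁ S₂) S₃ = star S₁ (star S₂ S₃) := by
  ext Y
  constructor
  · rintro ⟨E, Z₃, f, g, h, hT, ⟨X₁, Z₂, a, b, c, hTE, h₁, h₂⟩, h₃⟩
    obtain ⟨W, v, w, hW⟩ := distinguished_cocone_triangle (a ≫ f)
    have O := Triangulated.someOctahedron rfl hTE hT hW
    exact ⟨X₁, W, a ≫ f, v, w, hW, h₁, ⟨Z₂, Z₃, _, _, _, O.mem, h₂, h₃⟩⟩
  · rintro ⟨X₁, F, f, g, h, hT, h₁, ⟨Z₂, Z₃, a, b, c, hTF, h₂, h₃⟩⟩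
    obtain ⟨G, p, q, hG⟩ := distinguished_cocone_triangle (g ≫ b)
    have O := Triangulated.someOctahedron rfl (rot_of_distTriang _ hT)
      (rot_of_distTriang _ hTF) hG
    have h5 := Triangle.shift_distinguished _ O.mem (-1)
    have h6 := distIso₁ h5 ((shiftFunctorCompIsoId C (1:ℤ) (-1:ℤ) (by ring)).app X₁)
    have h7 := distIso₃ h6 ((shiftFunctorCompIsoId C (1:ℤ) (-1:ℤ) (by ring)).app Z₂)
    have hGmem : G⟦(-1:ℤ)⟧ ∈ star S₁ S₂ := ⟨X₁, Z₂, _, _, _, h7, h₁, h₂⟩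
    have hinv := inv_rot_of_distTriang _ hG
    exact ⟨G⟦(-1:ℤ)⟧, Z₃, _, _, _, hinv, hGmem, h₃⟩

lemma V_mono {S S' : Set C} (h : S ⊆ S') : ∀ n, V S n ⊆ V S' n
  | 0 => h
  | n + 1 => star_mono (V_mono h n) (shiftSet_mono h _)

lemma zero_mem_shiftSet {P : Set C} (hPzero : ∀ ⦃X : C⦄, IsZero X → X ∈ P) (n : ℤ) :
    (0 : C) ∈ shiftSet n P := by
  refine ⟨0, hPzero (isZero_zero C), ⟨(isZero_zero C).iso ?_⟩⟩
  exact Functor.map_isZero _ (isZero_zero C)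

lemma V_pad {P : Set C} (hPzero : ∀ ⦃X : C⦄, IsZero X → X ∈ P) (n : ℕ) :
    V P n ⊆ V P (n+1) := by
  intro X hX
  exact ⟨X, 0, 𝟙 X, 0, 0, contractible_distinguished X, hX, zero_mem_shiftSet hPzero _⟩

lemma V_le {P : Set C} (hPzero : ∀ ⦃X : C⦄, IsZero X → X ∈ P) {n m : ℕ} (h : n ≤ m) :
    V P n ⊆ V P m := by
  induction m with
  | zero => simpa [Nat.le_zero.mp h] using subset_rfl
  | succ m ih =>
    rcases Nat.lt_or_ge n (m+1) with h' | h'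
    · exact (ih (Nat.lt_succ_iff.mp h')).trans (V_pad hPzero m)
    · have : n = m + 1 := le_antisymm h h'
      subst this; exact subset_rfl

lemma V_succ_right [IsTriangulated C] (S : Set C) :
    ∀ n, star S (shiftSet 1 (V S n)) = V S (n+1)
  | 0 => by
    show star S (shiftSet 1 S) = star (V S 0) (shiftSet ((0:ℕ) + 1 : ℤ) S)
    norm_num [V]
  | n + 1 => by
    have e1 : shiftSet 1 (V S (n+1)) =
        star (shiftSet 1 (V S n)) (shiftSet ((n:ℤ) + 1 + 1) S) := by
      show shiftSet 1 (star (V S n) (shiftSet ((n:ℤ)+1) S)) = _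
      rw [star_shiftSet, shiftSet_shiftSet]
    rw [e1, ← star_assoc, V_succ_right S n]
    show star (V S (n+1)) (shiftSet ((n:ℤ) + 1 + 1) S) =
      star (V S (n+1)) (shiftSet (((n:ℕ)+1 : ℕ) + 1 : ℤ) S)
    norm_num

lemma B_succ_right [IsTriangulated C] (I P : Set C) :
    ∀ j, star I (shiftSet 1 (B I P j)) = B I P (j+1)
  | 0 => by
    show star I (shiftSet 1 P) = star (V I 0) (shiftSet ((0:ℕ) + 1 : ℤ) P)
    norm_num [V]
  | j + 1 => by
    have e1 : shiftSet 1 (B I P (j+1)) =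
        star (shiftSet 1 (V I j)) (shiftSet ((j:ℤ) + 1 + 1) P) := by
      show shiftSet 1 (star (V I j) (shiftSet ((j:ℤ)+1) P)) = _
      rw [star_shiftSet, shiftSet_shiftSet]
    rw [e1, ← star_assoc, V_succ_right I j]
    show star (V I (j+1)) (shiftSet ((j:ℤ) + 1 + 1) P) =
      star (V I (j+1)) (shiftSet (((j:ℕ)+1 : ℕ) + 1 : ℤ) P)
    norm_num

lemma B_sub_V {I P : Set C} (hIP : I ⊆ P) : ∀ i, B I P i ⊆ V P i
  | 0 => subset_rfl
  | i + 1 => star_mono (V_mono hIP i) subset_rfl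

/-! ### extKer lemmas -/

section Ker

variable {I P : Set C}

lemma extKer_iso {X Y : C} (hX : X ∈ extKer I) (e : X ≅ Y) : Y ∈ extKer I := by
  intro I' hI' m hm f
  have : e.hom ≫ f = 0 := hX I' hI' m hm _
  rw [← Category.id_comp f, ← e.inv_hom_id, Category.assoc, this, Limits.comp_zero]

lemma extKer_ext {A M Z : C} {f : A ⟶ M} {g : M ⟶ Z} {h : Z ⟶ A⟦(1:ℤ)⟧}
    (hT : Triangle.mk f g h ∈ distTriang C)
    (hA : A ∈ extKer I) (hZ : Z ∈ extKer I) : M ∈ extKer I := by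
  intro I' hI' m hm φ
  obtain ⟨ψ, hψ⟩ := Triangle.yoneda_exact₂ _ hT φ (hA I' hI' m hm _)
  erw [hψ, hZ I' hI' m hm ψ, Limits.comp_zero]; rfl

lemma extKer_biprod {X Y : C} (hX : X ∈ extKer I) (hY : Y ∈ extKer I) :
    (X ⊞ Y) ∈ extKer I := by
  intro I' hI' m hm f
  apply biprod.hom_ext' <;> simp [hX I' hI' m hm _, hY I' hI' m hm _]

lemma transfer_epi {X Y Q : C} {u : X ⟶ Y} {v : Y ⟶ Q} {w : Q ⟶ X⟦(1:ℤ)⟧}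
    (hT : Triangle.mk u v w ∈ distTriang C)
    (hQ : ∀ I' ∈ I, ∀ f : Q ⟶ I'⟦(1:ℤ)⟧, f = 0) :
    ∀ I' ∈ I, ∀ g : X ⟶ I', ∃ g' : Y ⟶ I', u ≫ g' = g := by
  intro I' hI' g
  have hinv := inv_rot_of_distTriang _ hT
  have hz : (Triangle.mk u v w).invRotate.mor₁ ≫ g = 0 :=
    hom_from_shift_neg_one_zero (hQ I' hI') _
  obtain ⟨g', hg'⟩ := Triangle.yoneda_exact₂ _ hinv g hz
  exact ⟨g', hg'.symm⟩

/-- The cone of a left `I`-approximation of an object of `extKer I` lies in `extKer I`. -/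
lemma cone_of_appr_extKer {X I₀ Q : C} {u : X ⟶ I₀} {p : I₀ ⟶ Q} {q : Q ⟶ X⟦(1:ℤ)⟧}
    (hT : Triangle.mk u p q ∈ distTriang C)
    (hX : X ∈ extKer I) (hI₀ : I₀ ∈ extKer I)
    (happr : ∀ I' ∈ I, ∀ g : X ⟶ I', ∃ t : I₀ ⟶ I', u ≫ t = g) :
    Q ∈ extKer I := by
  intro I' hI' m hm φ
  obtain ⟨ψ, hψ⟩ := Triangle.yoneda_exact₃ _ hT φ (hI₀ I' hI' m hm _)
  change φ = q ≫ ψ at hψ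
  rcases eq_or_lt_of_le hm with hm1 | hm2
  · -- m = 1
    subst hm1
    have : ψ = (shiftFunctor C (1:ℤ)).map ((shiftFunctor C (1:ℤ)).preimage ψ) :=
      ((shiftFunctor C (1:ℤ)).map_preimage ψ).symm
    obtain ⟨t, ht⟩ := happr I' hI' ((shiftFunctor C (1:ℤ)).preimage ψ)
    have hz : q ≫ (shiftFunctor C (1:ℤ)).map u = 0 := comp_distTriang_mor_zero₃₁ _ hT
    erw [hψ, this, ← ht, Functor.map_comp, ← Category.assoc, hz, Limits.zero_comp]
  · -- m ≥ 2
    obtain ⟨m', rfl⟩ : ∃ m', m = m' + 1 := ⟨m - 1, by ring⟩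
    have hm' : 1 ≤ m' := by omega
    rw [hψ, hom_shift_one_zero (fun k hk f => hX I' hI' k hk f) m' hm' ψ, Limits.comp_zero]

lemma I_sub_extKer (hIP : I ⊆ P)
    (hPconn : ∀ ⦃X Y : C⦄, X ∈ P → Y ∈ P → ∀ n : ℤ, 1 ≤ n → ∀ f : X ⟶ Y⟦n⟧, f = 0)
    {J : C} (hJ : J ∈ P) : J ∈ extKer I :=
  fun I' hI' m hm f => hPconn hJ (hIP hI') m hm f

end Ker

/-! ### Approximations and depth -/

/-- `X` admits a left `I`-approximation. -/
def Appr (I : Set C) (X : C) : Prop :=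
  ∃ I₀ ∈ I, ∃ u : X ⟶ I₀, ∀ I' ∈ I, ∀ g : X ⟶ I', ∃ t : I₀ ⟶ I', u ≫ t = g

/-- Iterated approximability: `Dd I k X` means `X` has a left `I`-approximation whose cone (in
`extKer I`) again satisfies `Dd I (k-1)`. -/
def Dd (I : Set C) : ℕ → C → Prop
  | 0 => Appr I
  | k + 1 => fun X => ∃ I₀ ∈ I, ∃ u : X ⟶ I₀,
      (∀ I' ∈ I, ∀ g : X ⟶ I', ∃ t : I₀ ⟶ I', u ≫ t = g) ∧
      ∃ (Q : C) (p : I₀ ⟶ Q) (q : Q ⟶ X⟦(1:ℤ)⟧), (Triangle.mk u p q ∈ distTriang C) ∧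
        Q ∈ extKer I ∧ Dd I k Q

section DdLemmas

variable {I : Set C}

lemma Dd_appr {k : ℕ} {X : C} (h : Dd I k X) : Appr I X := by
  cases k with
  | zero => exact h
  | succ k => obtain ⟨I₀, hI₀, u, hu, _⟩ := h; exact ⟨I₀, hI₀, u, hu⟩

lemma Appr_iso {X Y : C} (h : Appr I X) (e : X ≅ Y) : Appr I Y := by
  obtain ⟨I₀, hI₀, u, hu⟩ := h
  refine ⟨I₀, hI₀, e.inv ≫ u, fun I' hI' g => ?_⟩
  obtain ⟨t, ht⟩ := hu I' hI' (e.hom ≫ g)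
  exact ⟨t, by rw [Category.assoc, ht, ← Category.assoc, e.inv_hom_id, Category.id_comp]⟩

lemma Dd_iso : ∀ {k : ℕ} {X Y : C}, Dd I k X → (X ≅ Y) → Dd I k Y
  | 0, X, Y, h, e => Appr_iso h e
  | k + 1, X, Y, h, e => by
    obtain ⟨I₀, hI₀, u, hu, Q, p, q, hT, hQ, hD⟩ := h
    refine ⟨I₀, hI₀, e.inv ≫ u, ?_, Q, p, q ≫ e.hom⟦(1:ℤ)⟧', distIso₁ hT e, hQ, hD⟩
    intro I' hI' g
    obtain ⟨t, ht⟩ := hu I' hI' (e.hom ≫ g)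
    exact ⟨t, by rw [Category.assoc, ht, ← Category.assoc, e.inv_hom_id, Category.id_comp]⟩

lemma Appr_of_biprod_left {X J : C} (h : Appr I (X ⊞ J)) : Appr I X := by
  obtain ⟨I₀, hI₀, u, hu⟩ := h
  refine ⟨I₀, hI₀, biprod.inl ≫ u, fun I' hI' g => ?_⟩
  obtain ⟨t, ht⟩ := hu I' hI' (biprod.desc g 0)
  exact ⟨t, by rw [Category.assoc, ht, biprod.inl_desc]⟩

lemma Appr_absorb (hIsum : ∀ ⦃X Y : C⦄, X ∈ I → Y ∈ I → (X ⊞ Y) ∈ I)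
    {J X : C} (hJ : J ∈ I) (h : Appr I X) : Appr I (J ⊞ X) := by
  obtain ⟨I₀, hI₀, u, hu⟩ := h
  refine ⟨J ⊞ I₀, hIsum hJ hI₀, biprod.map (𝟙 J) u, fun I' hI' γ => ?_⟩
  obtain ⟨t, ht⟩ := hu I' hI' (biprod.inr ≫ γ)
  refine ⟨biprod.desc (biprod.inl ≫ γ) t, ?_⟩
  apply biprod.hom_ext'
  · rw [← Category.assoc, biprod.inl_map, Category.assoc, biprod.inl_desc, Category.id_comp]
  · rw [← Category.assoc, biprod.inr_map, Category.assoc, biprod.inr_desc, ht]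

lemma Dd_absorb (hIsum : ∀ ⦃X Y : C⦄, X ∈ I → Y ∈ I → (X ⊞ Y) ∈ I)
    (hIker : ∀ ⦃J : C⦄, J ∈ I → J ∈ extKer I) :
    ∀ {k : ℕ} {J X : C}, J ∈ I → Dd I k X → Dd I k (J ⊞ X)
  | 0, J, X, hJ, h => Appr_absorb hIsum hJ h
  | k + 1, J, X, hJ, h => by
    obtain ⟨I₀, hI₀, u, hu, Q, p, q, hT, hQ, hD⟩ := h
    obtain ⟨p', q', hT'⟩ := biprodMapTriangle J hT
    refine ⟨J ⊞ I₀, hIsum hJ hI₀, biprod.map (𝟙 J) u, fun I' hI' γ => ?_, Q, p', q', hT', hQ, hD⟩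
    obtain ⟨t, ht⟩ := hu I' hI' (biprod.inr ≫ γ)
    refine ⟨biprod.desc (biprod.inl ≫ γ) t, ?_⟩
    apply biprod.hom_ext'
    · rw [← Category.assoc, biprod.inl_map, Category.assoc, biprod.inl_desc, Category.id_comp]
    · rw [← Category.assoc, biprod.inr_map, Category.assoc, biprod.inr_desc, ht]

lemma Dd_restrict [IsTriangulated C] (hIsum : ∀ ⦃X Y : C⦄, X ∈ I → Y ∈ I → (X ⊞ Y) ∈ I)
    (hIker : ∀ ⦃J : C⦄, J ∈ I → J ∈ extKer I) :
    ∀ {k : ℕ} {X J : C}, J ∈ I → Dd I k (X ⊞ J) → Dd I k X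
  | 0, X, J, hJ, h => Appr_of_biprod_left h
  | k + 1, X, J, hJ, h => by
    obtain ⟨I₀, hI₀, u, hu, Qu, p, q, hT, hQu, hD⟩ := h
    -- octahedron on (inl : X ⟶ X ⊞ J, u)
    obtain ⟨Qs, ps, qs, hTs⟩ := distinguished_cocone_triangle ((biprod.inl : X ⟶ X ⊞ J) ≫ u)
    have hbb : Triangle.mk (biprod.inl : X ⟶ X ⊞ J) biprod.snd 0 ∈ distTriang C :=
      binaryBiproductTriangle_distinguished X J
    have O := Triangulated.someOctahedron rfl hbb hT hTs
    have hmem := O.mem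
    rw [show q ≫ (biprod.snd : X ⊞ J ⟶ J)⟦(1:ℤ)⟧' = 0 from hQu J hJ 1 le_rfl _] at hmem
    obtain ⟨e, -, -⟩ := splitIso hmem
    refine ⟨I₀, hI₀, biprod.inl ≫ u, fun I' hI' g => ?_, Qs, ps, qs, hTs,
      extKer_iso (extKer_biprod (hIker hJ) hQu) e.symm,
      Dd_iso (Dd_absorb hIsum hIker hJ hD) e.symm⟩
    obtain ⟨t, ht⟩ := hu I' hI' (biprod.desc g 0)
    exact ⟨t, by rw [Category.assoc, ht, biprod.inl_desc]⟩

end DdLemmas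

/-! ### The gluing construction -/

section Glue

variable {I : Set C}

/-- Core construction: given a distinguished triangle `A ⟶ M ⟶ B ⟶ A⟦1⟧` where the cone `Qα` of
an approximation `α : A ⟶ IA` is `extKer`, and `B ∈ extKer I` has an approximation
`β : B ⟶ IB` with cone `Qβ`, the object `M` has an approximation `u : M ⟶ IA ⊞ IB` whose
cone `QM` sits in a distinguished triangle `Qα ⟶ QM ⟶ Qβ ⟶ Qα⟦1⟧`. -/
lemma glue_core [IsTriangulated C] {A M E : C} {f : A ⟶ M} {g : M ⟶ E} {h : E ⟶ A⟦(1:ℤ)⟧}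
    (hT : Triangle.mk f g h ∈ distTriang C)
    {IA : C} (hIA : IA ∈ I) {α : A ⟶ IA} {Qα : C} {pα : IA ⟶ Qα} {qα : Qα ⟶ A⟦(1:ℤ)⟧}
    (hTα : Triangle.mk α pα qα ∈ distTriang C) (hQα : Qα ∈ extKer I)
    (hBker : E ∈ extKer I)
    {IB : C} (hIB : IB ∈ I) {β : E ⟶ IB} (hβ : ∀ I' ∈ I, ∀ γ : E ⟶ I', ∃ t : IB ⟶ I', β ≫ t = γ)
    {Qβ : C} {pβ : IB ⟶ Qβ} {qβ : Qβ ⟶ E⟦(1:ℤ)⟧}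
    (hTβ : Triangle.mk β pβ qβ ∈ distTriang C) :
    ∃ (u : M ⟶ IA ⊞ IB),
      (∀ I' ∈ I, ∀ γ : M ⟶ I', ∃ t : IA ⊞ IB ⟶ I', u ≫ t = γ) ∧
      ∃ (QM : C) (pM : IA ⊞ IB ⟶ QM) (qM : QM ⟶ M⟦(1:ℤ)⟧),
        (Triangle.mk u pM qM ∈ distTriang C) ∧
        ∃ (m₁ : Qα ⟶ QM) (m₂ : QM ⟶ Qβ) (t3 : Qβ ⟶ Qα⟦(1:ℤ)⟧),
          Triangle.mk m₁ m₂ t3 ∈ distTriang C := by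
  classical
  -- inverse rotation of the given triangle
  have h₁₂ := inv_rot_of_distTriang _ hT
  set T' := (Triangle.mk f g h).invRotate with hT'def
  set δ : E⟦(-1:ℤ)⟧ ⟶ A := T'.mor₁ with hδdef
  -- the composite `δ ≫ α` vanishes
  have hδα : δ ≫ α = 0 :=
    hom_from_shift_neg_one_zero (fun φ => hBker IA hIA 1 le_rfl φ) _
  -- cone of the zero map
  obtain ⟨M₁, v₁, w₁, h₁₃⟩ := distinguished_cocone_triangle (0 : E⟦(-1:ℤ)⟧ ⟶ IA)
  have O₁ := Triangulated.someOctahedron hδα h₁₂ hTα h₁₃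
  -- transfer of maps into objects of I along O₁.m₁
  have transfer₁ : ∀ I' ∈ I, ∀ γ : M ⟶ I', ∃ γ₁ : M₁ ⟶ I', O₁.m₁ ≫ γ₁ = γ :=
    transfer_epi O₁.mem (fun I' hI' φ => hQα I' hI' 1 le_rfl φ)
  -- the middle object of the `0`-cone triangle splits
  have hrot : Triangle.mk v₁ w₁ (0 : (E⟦(-1:ℤ)⟧)⟦(1:ℤ)⟧ ⟶ IA⟦(1:ℤ)⟧) ∈ distTriang C := by
    have hr := rot_of_distTriang _ h₁₃
    have e0 : -((0 : E⟦(-1:ℤ)⟧ ⟶ IA)⟦(1:ℤ)⟧') = (0 : (E⟦(-1:ℤ)⟧)⟦(1:ℤ)⟧ ⟶ IA⟦(1:ℤ)⟧) := by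
      simp
    simp [Triangle.rotate, e0, Triangle.mk] at hr; erw [neg_zero] at hr; exact hr
  obtain ⟨e₁, -, -⟩ := splitIso hrot
  -- identify `E⟦-1⟧⟦1⟧` with `E`
  set N := (E⟦(-1:ℤ)⟧)⟦(1:ℤ)⟧ with hNdef
  have ε : N ≅ E := (shiftFunctorCompIsoId C (-1:ℤ) (1:ℤ) (by ring)).app E
  -- approximation triangle for `E` transported to `N`
  have hTβN : Triangle.mk (ε.hom ≫ β) pβ (qβ ≫ ε.symm.hom⟦(1:ℤ)⟧') ∈ distTriang C := by
    have := distIso₁ hTβ ε.symm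
    simpa using this
  obtain ⟨p₂, q₂, hT₂⟩ := biprodMapTriangle IA hTβN
  -- the composite approximation of M
  have h₁₂'' := distIso₂ O₁.mem e₁
  obtain ⟨QM, pM, qM, hTM⟩ :=
    distinguished_cocone_triangle ((O₁.m₁ ≫ e₁.hom) ≫ biprod.map (𝟙 IA) (ε.hom ≫ β))
  have O₂ := Triangulated.someOctahedron rfl h₁₂'' hT₂ hTM
  refine ⟨(O₁.m₁ ≫ e₁.hom) ≫ biprod.map (𝟙 IA) (ε.hom ≫ β), ?_, QM, pM, qM, hTM,
    O₂.m₁, O₂.m₃, _, O₂.mem⟩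
  -- the approximation property
  intro I' hI' γ
  obtain ⟨γ₁, hγ₁⟩ := transfer₁ I' hI' γ
  obtain ⟨t, ht⟩ := hβ I' hI' (ε.inv ≫ (biprod.inr ≫ (e₁.inv ≫ γ₁)))
  refine ⟨biprod.desc (biprod.inl ≫ (e₁.inv ≫ γ₁)) t, ?_⟩
  have hdesc : biprod.map (𝟙 IA) (ε.hom ≫ β) ≫ biprod.desc (biprod.inl ≫ (e₁.inv ≫ γ₁)) t
      = biprod.desc (biprod.inl ≫ (e₁.inv ≫ γ₁)) (ε.hom ≫ β ≫ t) := by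
    apply biprod.hom_ext'
    · rw [← Category.assoc, biprod.inl_map, Category.assoc, biprod.inl_desc, biprod.inl_desc,
        Category.id_comp]
    · rw [← Category.assoc, biprod.inr_map, Category.assoc, biprod.inr_desc, biprod.inr_desc,
        Category.assoc]
  have hη : ε.hom ≫ β ≫ t = biprod.inr ≫ (e₁.inv ≫ γ₁) := by
    rw [ht, ← Category.assoc, ε.hom_inv_id, Category.id_comp]
  have hfinal : biprod.desc (biprod.inl ≫ (e₁.inv ≫ γ₁)) (biprod.inr ≫ (e₁.inv ≫ γ₁))
      = e₁.inv ≫ γ₁ := by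
    apply biprod.hom_ext' <;> simp
  erw [Category.assoc, hdesc, hη, hfinal, Category.assoc, e₁.hom_inv_id_assoc, hγ₁]

end Glue

/-- Depth-preserving gluing: if the two outer terms of a distinguished triangle lie in
`extKer I` and satisfy `Dd I k`, then so does the middle term. -/
lemma glue_depth [IsTriangulated C] {I : Set C}
    (hIsum : ∀ ⦃X Y : C⦄, X ∈ I → Y ∈ I → (X ⊞ Y) ∈ I)
    (hIker : ∀ ⦃J : C⦄, J ∈ I → J ∈ extKer I) :
    ∀ (k : ℕ) {A M E : C} {f : A ⟶ M} {g : M ⟶ E} {h : E ⟶ A⟦(1:ℤ)⟧}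
      (_ : Triangle.mk f g h ∈ distTriang C)
      (_ : A ∈ extKer I) (_ : Dd I k A) (_ : E ∈ extKer I) (_ : Dd I k E), Dd I k M
  | 0, A, M, E, f, g, h, hT, hA, hDA, hE, hDE => by
    obtain ⟨IA, hIA, α, hα⟩ := (hDA : Appr I A)
    obtain ⟨Qα, pα, qα, hTα⟩ := distinguished_cocone_triangle α
    have hQα : Qα ∈ extKer I := cone_of_appr_extKer hTα hA (hIker hIA) hα
    obtain ⟨IB, hIB, β, hβ⟩ := (hDE : Appr I E)
    obtain ⟨Qβ, pβ, qβ, hTβ⟩ := distinguished_cocone_triangle β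
    obtain ⟨u, hu, -⟩ := glue_core hT hIA hTα hQα hE hIB hβ hTβ
    exact ⟨IA ⊞ IB, hIsum hIA hIB, u, hu⟩
  | k + 1, A, M, E, f, g, h, hT, hA, hDA, hE, hDE => by
    obtain ⟨IA, hIA, α, hα, Qα, pα, qα, hTα, hQαker, hDQα⟩ := hDA
    obtain ⟨IB, hIB, β, hβ, Qβ, pβ, qβ, hTβ, hQβker, hDQβ⟩ := hDE
    obtain ⟨u, hu, QM, pM, qM, hTM, m₁, m₂, t3, hTQ⟩ :=
      glue_core hT hIA hTα hQαker hE hIB hβ hTβ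
    have hMker : M ∈ extKer I := extKer_ext hT hA hE
    have hQMker : QM ∈ extKer I :=
      cone_of_appr_extKer hTM hMker (hIker (hIsum hIA hIB)) hu
    have hDQM : Dd I k QM := glue_depth hIsum hIker k hTQ hQαker hDQα hQβker hDQβ
    exact ⟨IA ⊞ IB, hIsum hIA hIB, u, hu, QM, pM, qM, hTM, hQMker, hDQM⟩

/-- Split pushout: given distinguished triangles `S ⟶ A ⟶ M ⟶ S⟦1⟧` and `S ⟶ E ⟶ Q ⟶ S⟦1⟧`,
if there are no maps `M ⟶ E⟦1⟧` then there is a distinguished triangle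
`A ⟶ M ⊞ E ⟶ Q ⟶ A⟦1⟧`. -/
lemma split_pushout [IsTriangulated C] {S A M : C} {δ : S ⟶ A} {f : A ⟶ M} {g : M ⟶ S⟦(1:ℤ)⟧}
    (hT : Triangle.mk δ f g ∈ distTriang C)
    {E Q : C} {w : S ⟶ E} {p : E ⟶ Q} {q : Q ⟶ S⟦(1:ℤ)⟧}
    (hTw : Triangle.mk w p q ∈ distTriang C)
    (hME : ∀ φ : M ⟶ E⟦(1:ℤ)⟧, φ = 0) :
    ∃ (f' : A ⟶ M ⊞ E) (g' : M ⊞ E ⟶ Q) (h' : Q ⟶ A⟦(1:ℤ)⟧),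
      Triangle.mk f' g' h' ∈ distTriang C := by
  classical
  obtain ⟨Y, v, t, hY⟩ := distinguished_cocone_triangle (biprod.lift δ w)
  -- octahedron for (lift, snd) : cone of `w`
  have hsnd := rot_of_distTriang _ (binaryBiproductTriangle_distinguished A E)
  have O₁ := Triangulated.someOctahedron (biprod.lift_snd δ w) hY hsnd hTw
  -- rotate backwards to obtain the triangle `A ⟶ Y ⟶ Q`
  have hAYQ := inv_rot_of_distTriang _ O₁.mem
  have hAYQ' := distIso₁ hAYQ ((shiftFunctorCompIsoId C (1:ℤ) (-1:ℤ) (by ring)).app A)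
  -- octahedron for (lift, fst) : cone of `δ`
  have hr := rot_of_distTriang _ (binaryBiproductTriangle_distinguished E A)
  have hr2 := distIso₁ hr (biprod.braiding E A)
  have e1 : (biprod.braiding E A).inv ≫ (binaryBiproductTriangle E A).mor₂
      = (biprod.fst : A ⊞ E ⟶ A) := by
    simp [binaryBiproductTriangle, Triangle.mk]
  erw [e1] at hr2
  have O₂ := Triangulated.someOctahedron (biprod.lift_fst δ w) hY hr2 hT
  -- `O₂.mem : (Y, M, E⟦1⟧)` has second map `O₂.m₃ : M ⟶ E⟦1⟧`, which vanishes
  have hm₃ : O₂.m₃ = 0 := hME _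
  have hmem := O₂.mem
  rw [hm₃] at hmem
  obtain ⟨eY, -⟩ := splitIso_of_mor₂_zero hmem
  -- final: transport `A ⟶ Y ⟶ Q` along `Y ≅ M ⊞ E`
  have eME : Y ≅ M ⊞ E :=
    eY ≪≫ biprod.mapIso ((shiftFunctorCompIsoId C (1:ℤ) (-1:ℤ) (by ring)).app E) (Iso.refl M)
      ≪≫ biprod.braiding E M
  have hfinal := distIso₂ hAYQ' eME
  exact ⟨_, _, _, hfinal⟩

/-! ### The main induction -/

section Main

variable {I P : Set C}

/-- The third object (desuspended) of a triangle with `extKer` fiber and total object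
is again in `extKer`. -/
lemma extKer_of_third {P₀ S' Z S'' : C} {f : P₀ ⟶ S'} {g : S' ⟶ Z} {h : Z ⟶ P₀⟦(1:ℤ)⟧}
    (hT : Triangle.mk f g h ∈ distTriang C) (ζ : Z ≅ S''⟦(1:ℤ)⟧)
    (hP₀ : P₀ ∈ extKer I) (hS' : S' ∈ extKer I) : S'' ∈ extKer I := by
  intro I' hI' m hm φ
  have e : (I'⟦m⟧)⟦(1:ℤ)⟧ ≅ I'⟦m+1⟧ := ((shiftFunctorAdd' C m 1 (m+1) rfl).app I').symm
  set φZ : Z ⟶ I'⟦m+1⟧ := ζ.hom ≫ φ⟦(1:ℤ)⟧' ≫ e.hom with hφZ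
  have hgφZ : g ≫ φZ = 0 := hS' I' hI' (m+1) (by omega) _
  obtain ⟨ψ, hψ⟩ := Triangle.yoneda_exact₂ _ (rot_of_distTriang _ hT) φZ hgφZ
  have hψ0 : ψ = 0 := hom_shift_one_zero (fun kk hkk ff => hP₀ I' hI' kk hkk ff) m hm ψ
  have hφZ0 : φZ = 0 := by erw [hψ, hψ0, Limits.comp_zero]; rfl
  have h1 : φ⟦(1:ℤ)⟧' ≫ e.hom = 0 := by
    have := congrArg (fun x => ζ.inv ≫ x) hφZ0
    simpa [hφZ] using this
  have h2 : φ⟦(1:ℤ)⟧' = 0 := by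
    rw [← Category.comp_id (φ⟦(1:ℤ)⟧'), ← e.hom_inv_id, ← Category.assoc, h1, Limits.zero_comp]
  exact (shiftFunctor C (1:ℤ)).map_injective (by rw [h2, Functor.map_zero])

/-- Objects of `B I P j ∩ extKer I` satisfy `Dd I k` whenever `j + k ≤ d`. -/
lemma B_depth [IsTriangulated C] {d : ℕ}
    (hC : CovFin I {X | ∃ i ≤ d, X ∈ B I P i ∩ extKer I})
    (hIker : ∀ ⦃J : C⦄, J ∈ I → J ∈ extKer I) :
    ∀ (k j : ℕ), j + k ≤ d → ∀ X, X ∈ B I P j → X ∈ extKer I → Dd I k X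
  | 0, j, hjk, X, hXB, hXker => hC X ⟨j, by omega, hXB, hXker⟩
  | k+1, j, hjk, X, hXB, hXker => by
    obtain ⟨I₀, hI₀, u, hu⟩ := hC X ⟨j, by omega, hXB, hXker⟩
    obtain ⟨Q, p, q, hTQ⟩ := distinguished_cocone_triangle u
    have hQker : Q ∈ extKer I := cone_of_appr_extKer hTQ hXker (hIker hI₀) hu
    have hQB : Q ∈ B I P (j+1) := by
      rw [← B_succ_right I P j]
      exact ⟨I₀, X⟦(1:ℤ)⟧, p, q, _, rot_of_distTriang _ hTQ, hI₀, ⟨X, hXB, ⟨Iso.refl _⟩⟩⟩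
    exact ⟨I₀, hI₀, u, hu, Q, p, q, hTQ, hQker,
      B_depth hC hIker k (j+1) (by omega) Q hQB hQker⟩

/-- The main induction: objects of `V P n ∩ extKer I` satisfy `Dd I k` when `n + k = d`. -/
lemma main_ind [IsTriangulated C] {d : ℕ}
    (hIP : I ⊆ P)
    (hPconn : ∀ ⦃X Y : C⦄, X ∈ P → Y ∈ P → ∀ n : ℤ, 1 ≤ n → ∀ f : X ⟶ Y⟦n⟧, f = 0)
    (hIsum : ∀ ⦃X Y : C⦄, X ∈ I → Y ∈ I → (X ⊞ Y) ∈ I)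
    (hIker : ∀ ⦃J : C⦄, J ∈ I → J ∈ extKer I)
    (hC : CovFin I {X | ∃ i ≤ d, X ∈ B I P i ∩ extKer I}) :
    ∀ (n k : ℕ), n + k = d → ∀ S, S ∈ V P n → S ∈ extKer I → Dd I k S
  | 0, k, hnk, S, hS, hSker => B_depth hC hIker k 0 (by omega) S hS hSker
  | n+1, k, hnk, S, hS, hSker => by
    have hS' : S ∈ star P (shiftSet 1 (V P n)) := by rw [V_succ_right P n]; exact hS
    obtain ⟨P₀, Z, f, g, h, hT, hP₀, ⟨S'', hS''V, ⟨ζ⟩⟩⟩ := hS'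
    have hP₀ker : P₀ ∈ extKer I := fun I' hI' m hm φ => hPconn hP₀ (hIP hI') m hm φ
    have hS''ker : S'' ∈ extKer I := extKer_of_third hT ζ hP₀ker hSker
    have hD'' : Dd I (k+1) S'' :=
      main_ind hIP hPconn hIsum hIker hC n (k+1) (by omega) S'' hS''V hS''ker
    obtain ⟨I₂, hI₂, w'', hw'', Q'', p'', q'', hTQ'', hQ''ker, hDQ''⟩ := hD''
    obtain ⟨δ, g', hTf⟩ := fiberForm hT ζ
    obtain ⟨f', g₂, h₂, hTP⟩ := split_pushout hTf hTQ'' (fun φ => hSker I₂ hI₂ 1 le_rfl φ)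
    have hDP₀ : Dd I k P₀ := B_depth hC hIker k 0 (by omega) P₀ hP₀ hP₀ker
    have hglue := glue_depth hIsum hIker k hTP hP₀ker hDP₀ hQ''ker hDQ''
    exact Dd_restrict hIsum hIker hI₂ hglue

end Main

theorem statement5 [IsTriangulated C] (d : ℕ) (hd : 1 ≤ d) (P I : Set C) (hIP : I ⊆ P)
    (hPiso : ∀ ⦃X Y : C⦄, (X ≅ Y) → X ∈ P → Y ∈ P)
    (hPsum : ∀ ⦃X Y : C⦄, X ∈ P → Y ∈ P → (X ⊞ Y) ∈ P)
    (hPzero : ∀ ⦃X : C⦄, IsZero X → X ∈ P)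
    (hPconn : ∀ ⦃X Y : C⦄, X ∈ P → Y ∈ P → ∀ n : ℤ, 1 ≤ n → ∀ f : X ⟶ Y⟦n⟧, f = 0)
    (hIiso : ∀ ⦃X Y : C⦄, (X ≅ Y) → X ∈ I → Y ∈ I)
    (hIsum : ∀ ⦃X Y : C⦄, X ∈ I → Y ∈ I → (X ⊞ Y) ∈ I)
    (hIzero : ∀ ⦃X : C⦄, IsZero X → X ∈ I) :
    CovFin I (V P d ∩ extKer I) ↔
      CovFin I {X | ∃ i ≤ d, X ∈ B I P i ∩ extKer I} := by
  have hIker : ∀ ⦃J : C⦄, J ∈ I → J ∈ extKer I :=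
    fun J hJ I' hI' m hm φ => hPconn (hIP hJ) (hIP hI') m hm φ
  constructor
  · intro hA X hX
    obtain ⟨i, hid, hXB, hXker⟩ := hX
    exact hA X ⟨V_le hPzero hid (B_sub_V hIP i hXB), hXker⟩
  · intro hC X hX
    obtain ⟨hXV, hXker⟩ := hX
    exact main_ind hIP hPconn hIsum hIker hC d 0 (by omega) X hXV hXker

end AuslanderIyamaStmt5
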